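/- In a finite tree T with diameter D ≥ 4, if P is the unique path of length D in T and some vertex on P performs an improving swap (strictly decreasing its eccentricity), then the diameter of the resulting tree is strictly less than D. -/

import Mathlib

namespace NCG
open SimpleGraph

variable {V : Type*}

/-- Eccentricity of a vertex: maximum graph distance to any other vertex. -/
noncomputable def ecc [Fintype V] (G : SimpleGraph V) (x : V) : ℕ :=
  Finset.univ.sup fun y => G.dist x y

/-- Diameter: maximum eccentricity. -/
noncomputable def diam [Fintype V] (G : SimpleGraph V) : ℕ :=
  Finset.univ.sup fun x => ecc G x

/-- Radius: minimum eccentricity. -/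
noncomputable def rad [Fintype V] (G : SimpleGraph V) : ℕ :=
  sInf (Set.range (ecc G))

lemma dist_le_ecc [Fintype V] (G : SimpleGraph V) (x y : V) : G.dist x y ≤ ecc G x :=
  Finset.le_sup (Finset.mem_univ y)

lemma ecc_le_diam [Fintype V] (G : SimpleGraph V) (x : V) : ecc G x ≤ diam G :=
  Finset.le_sup (Finset.mem_univ x)

lemma dist_le_diam [Fintype V] (G : SimpleGraph V) (x y : V) : G.dist x y ≤ diam G :=
  le_trans (dist_le_ecc G x y) (ecc_le_diam G x)

lemma dist_split {G : SimpleGraph V} (hc : G.Connected) {x y c : V}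
    (p : G.Walk x y) (hp : p.length = G.dist x y) (hs : c ∈ p.support) :
    G.dist x y = G.dist x c + G.dist c y := by
  classical
  refine le_antisymm (hc.dist_triangle) ?_
  have h1 := SimpleGraph.dist_le (p.takeUntil c hs)
  have h2 := SimpleGraph.dist_le (p.dropUntil c hs)
  have h3 := congrArg SimpleGraph.Walk.length (p.take_spec hs)
  rw [SimpleGraph.Walk.length_append] at h3
  omega

lemma tree_path_length {G : SimpleGraph V} (hT : G.IsTree) {x y : V}
    (p : G.Walk x y) (hp : p.IsPath) : p.length = G.dist x y := by
  obtain ⟨q, hq, hql⟩ := hT.isConnected.exists_path_of_dist x y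
  have : (⟨p, hp⟩ : G.Path x y) = ⟨q, hq⟩ := hT.IsAcyclic.path_unique _ _
  rw [show p = q from congrArg Subtype.val this, hql]

lemma tree_bridge {G : SimpleGraph V} (hT : G.IsTree) {v u : V} (hadj : G.Adj v u) :
    ¬(G.deleteEdges {s(v, u)}).Reachable v u := by
  have hb := SimpleGraph.isAcyclic_iff_forall_edge_isBridge.mp hT.IsAcyclic
    (G.mem_edgeSet.mpr hadj)
  rw [SimpleGraph.isBridge_iff] at hb
  exact hb

lemma deleteEdges_swap (G : SimpleGraph V) (v u : V) :
    G.deleteEdges {s(u, v)} = G.deleteEdges {s(v, u)} := by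
  rw [Sym2.eq_swap]

lemma side_total {G : SimpleGraph V} (hc : G.Connected) (v u x : V) :
    (G.deleteEdges {s(v, u)}).Reachable v x ∨ (G.deleteEdges {s(v, u)}).Reachable u x := by
  have aux : ∀ {y z : V}, G.Walk y z →
      ((G.deleteEdges {s(v, u)}).Reachable v y ∨ (G.deleteEdges {s(v, u)}).Reachable u y) →
      ((G.deleteEdges {s(v, u)}).Reachable v z ∨ (G.deleteEdges {s(v, u)}).Reachable u z) := by
    intro y z p
    induction p with
    | nil => exact id
    | @cons y c z hadj q ih =>
      intro hy
      apply ih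
      by_cases he : s(y, c) = s(v, u)
      · rw [Sym2.eq_iff] at he
        rcases he with ⟨rfl, rfl⟩ | ⟨rfl, rfl⟩
        · exact Or.inr (Reachable.refl _)
        · exact Or.inl (Reachable.refl _)
      · have hadj' : (G.deleteEdges {s(v, u)}).Adj y c := by
          rw [SimpleGraph.deleteEdges_adj]
          exact ⟨hadj, by simpa using he⟩
        rcases hy with h1 | h1
        · exact Or.inl (h1.trans hadj'.reachable)
        · exact Or.inr (h1.trans hadj'.reachable)
  exact (hc.preconnected v x).elim fun p => aux p (Or.inl (Reachable.refl _))

lemma dist_from_other_side {G : SimpleGraph V} (hc : G.Connected) {v u : V} (hadj : G.Adj v u)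
    (hbr : ¬(G.deleteEdges {s(v, u)}).Reachable v u) {x : V}
    (hx : (G.deleteEdges {s(v, u)}).Reachable v x) :
    G.dist u x = G.dist v x + 1 := by
  have hd1 : G.dist u v = 1 := SimpleGraph.dist_eq_one_iff_adj.mpr hadj.symm
  have hle : G.dist u x ≤ G.dist v x + 1 := by
    have := hc.dist_triangle (u := u) (v := v) (w := x)
    omega
  obtain ⟨p, hp⟩ := hc.exists_walk_length_eq_dist u x
  by_cases he : s(v, u) ∈ p.edges
  · have hvs : v ∈ p.support := p.fst_mem_support_of_mem_edges he
    have := dist_split hc p hp hvs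
    omega
  · have hsub : ∀ e ∈ p.edges, e ∈ (G.deleteEdges {s(v, u)}).edgeSet := by
      intro e hep
      rw [SimpleGraph.edgeSet_deleteEdges]
      exact ⟨p.edges_subset_edgeSet hep, by
        simp only [Set.mem_singleton_iff]
        rintro rfl; exact he hep⟩
    exact absurd (hx.trans ((p.transfer _ hsub).reachable).symm) hbr

lemma dist_from_other_side' {G : SimpleGraph V} (hc : G.Connected) {v u : V} (hadj : G.Adj v u)
    (hbr : ¬(G.deleteEdges {s(v, u)}).Reachable v u) {y : V}
    (hy : (G.deleteEdges {s(v, u)}).Reachable u y) :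
    G.dist v y = G.dist u y + 1 := by
  have hd1 : G.dist v u = 1 := SimpleGraph.dist_eq_one_iff_adj.mpr hadj
  have hle : G.dist v y ≤ G.dist u y + 1 := by
    have := hc.dist_triangle (u := v) (v := u) (w := y)
    omega
  obtain ⟨p, hp⟩ := hc.exists_walk_length_eq_dist v y
  by_cases he : s(v, u) ∈ p.edges
  · have hus : u ∈ p.support := p.snd_mem_support_of_mem_edges he
    have := dist_split hc p hp hus
    omega
  · have hsub : ∀ e ∈ p.edges, e ∈ (G.deleteEdges {s(v, u)}).edgeSet := by
      intro e hep
      rw [SimpleGraph.edgeSet_deleteEdges]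
      exact ⟨p.edges_subset_edgeSet hep, by
        simp only [Set.mem_singleton_iff]
        rintro rfl; exact he hep⟩
    exact absurd (((p.transfer _ hsub).reachable).trans hy.symm) hbr

lemma geodesic_transfer {G : SimpleGraph V} (hc : G.Connected) {v u : V} (hadj : G.Adj v u)
    (hbr : ¬(G.deleteEdges {s(v, u)}).Reachable v u) {x y : V}
    (hx : (G.deleteEdges {s(v, u)}).Reachable v x)
    (hy : (G.deleteEdges {s(v, u)}).Reachable v y) :
    ∃ p : (G.deleteEdges {s(v, u)}).Walk x y, p.length = G.dist x y := by
  obtain ⟨p, hp⟩ := hc.exists_walk_length_eq_dist x y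
  by_cases he : s(v, u) ∈ p.edges
  · exfalso
    have hvs : v ∈ p.support := p.fst_mem_support_of_mem_edges he
    have hus : u ∈ p.support := p.snd_mem_support_of_mem_edges he
    have e1 := dist_split hc p hp hvs
    have e2 := dist_split hc p hp hus
    have e3 := dist_from_other_side hc hadj hbr hx
    have e4 := dist_from_other_side hc hadj hbr hy
    have c1 : G.dist x v = G.dist v x := SimpleGraph.dist_comm
    have c2 : G.dist x u = G.dist u x := SimpleGraph.dist_comm
    omega
  · have hsub : ∀ e ∈ p.edges, e ∈ (G.deleteEdges {s(v, u)}).edgeSet := by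
      intro e hep
      rw [SimpleGraph.edgeSet_deleteEdges]
      exact ⟨p.edges_subset_edgeSet hep, by
        simp only [Set.mem_singleton_iff]
        rintro rfl; exact he hep⟩
    exact ⟨p.transfer _ hsub, by rw [SimpleGraph.Walk.length_transfer, hp]⟩

lemma cross_dist {G : SimpleGraph V} (hc : G.Connected) {v u : V} (hadj : G.Adj v u)
    (hbr : ¬(G.deleteEdges {s(v, u)}).Reachable v u) {x y : V}
    (hx : (G.deleteEdges {s(v, u)}).Reachable v x)
    (hy : (G.deleteEdges {s(v, u)}).Reachable u y) :
    G.dist x y = G.dist x v + 1 + G.dist u y := by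
  have hdvy : G.dist v y = G.dist u y + 1 := dist_from_other_side' hc hadj hbr hy
  have hd1 : G.dist v u = 1 := SimpleGraph.dist_eq_one_iff_adj.mpr hadj
  have hcomm : G.dist x v = G.dist v x := SimpleGraph.dist_comm
  have hle : G.dist x y ≤ G.dist x v + 1 + G.dist u y := by
    have := hc.dist_triangle (u := x) (v := v) (w := y)
    omega
  refine le_antisymm hle ?_
  obtain ⟨p, hp⟩ := hc.exists_walk_length_eq_dist x y
  by_cases he : s(v, u) ∈ p.edges
  · have hvs : v ∈ p.support := p.fst_mem_support_of_mem_edges he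
    have e1 := dist_split hc p hp hvs
    omega
  · exfalso
    have hsub : ∀ e ∈ p.edges, e ∈ (G.deleteEdges {s(v, u)}).edgeSet := by
      intro e hep
      rw [SimpleGraph.edgeSet_deleteEdges]
      exact ⟨p.edges_subset_edgeSet hep, by
        simp only [Set.mem_singleton_iff]
        rintro rfl; exact he hep⟩
    exact hbr ((hx.trans (p.transfer _ hsub).reachable).trans hy.symm)


/-- Basic structure of the swap. -/
lemma swap_setup {T T' : SimpleGraph V} (hT : T.IsTree) (hT't : T'.IsTree)
    {v u w : V} (hvu : T.Adj v u)
    (hT'edges : T'.edgeSet = (T.edgeSet \ {s(v, u)}) ∪ {s(v, w)})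
    (hne : T' ≠ T) :
    T'.Adj v w ∧ s(v, w) ∉ T.edgeSet ∧
      T'.deleteEdges {s(v, w)} = T.deleteEdges {s(v, u)} := by
  have hvw' : T'.Adj v w := by
    rw [← SimpleGraph.mem_edgeSet, hT'edges]
    exact Or.inr rfl
  have hnotT : s(v, w) ∉ T.edgeSet := by
    intro hin
    by_cases heq : s(v, w) = s(v, u)
    · apply hne
      apply SimpleGraph.edgeSet_inj.mp
      rw [hT'edges, heq]
      exact Set.diff_union_of_subset (Set.singleton_subset_iff.mpr (T.mem_edgeSet.mpr hvu))
    · have hE : T'.edgeSet = T.edgeSet \ {s(v, u)} := by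
        rw [hT'edges]
        exact Set.union_eq_left.mpr (Set.singleton_subset_iff.mpr ⟨hin, heq⟩)
      have hTeq : T' = T.deleteEdges {s(v, u)} := by
        apply SimpleGraph.edgeSet_inj.mp
        rw [SimpleGraph.edgeSet_deleteEdges, hE]
      exact tree_bridge hT hvu (hTeq ▸ hT't.isConnected v u)
  refine ⟨hvw', hnotT, ?_⟩
  apply SimpleGraph.edgeSet_inj.mp
  rw [SimpleGraph.edgeSet_deleteEdges, SimpleGraph.edgeSet_deleteEdges, hT'edges]
  ext e
  simp only [Set.mem_diff, Set.mem_union, Set.mem_singleton_iff]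
  constructor
  · rintro ⟨⟨he, hne2⟩ | rfl, hne1⟩
    · exact ⟨he, hne2⟩
    · exact absurd rfl hne1
  · rintro ⟨he, hne2⟩
    exact ⟨Or.inl ⟨he, hne2⟩, fun h => hnotT (h ▸ he)⟩

section Key
variable [Fintype V] [DecidableEq V]

lemma key (T T' : SimpleGraph V) (hT : T.IsTree) (hT't : T'.IsTree)
    (v u w a b : V) (hvu : T.Adj v u)
    (hT'edges : T'.edgeSet = (T.edgeSet \ {s(v, u)}) ∪ {s(v, w)})
    (himp : ecc T' v < ecc T v)
    (hDpos : 0 < diam T)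
    (hdab : T.dist a b = diam T)
    (hsplit : T.dist a v + T.dist v b = diam T)
    (huniq : ∀ x y : V, T.dist x y = diam T → (x = a ∧ y = b) ∨ (x = b ∧ y = a))
    (hb : (T.deleteEdges {s(v, u)}).Reachable u b) :
    diam T' < diam T := by
  have hc := hT.isConnected
  have hc' := hT't.isConnected
  have hne : T' ≠ T := fun h => absurd himp (by rw [h]; exact lt_irrefl _)
  obtain ⟨hvw', hnotT, HeqT'⟩ := swap_setup hT hT't hvu hT'edges hne
  have hbr : ¬(T.deleteEdges {s(v, u)}).Reachable v u := tree_bridge hT hvu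
  have hbrw : ¬(T.deleteEdges {s(v, u)}).Reachable v w := by
    have := tree_bridge hT't hvw'
    rwa [HeqT'] at this
  have not_both : ∀ z, (T.deleteEdges {s(v, u)}).Reachable v z →
      (T.deleteEdges {s(v, u)}).Reachable u z → False :=
    fun z h1 h2 => hbr (h1.trans h2.symm)
  have hsubT : (T.deleteEdges {s(v, u)}).edgeSet ⊆ T.edgeSet := by
    rw [SimpleGraph.edgeSet_deleteEdges]; exact Set.diff_subset
  have hsubT' : (T.deleteEdges {s(v, u)}).edgeSet ⊆ T'.edgeSet := by
    rw [SimpleGraph.edgeSet_deleteEdges, hT'edges]; exact Set.subset_union_left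
  have distle : ∀ (G2 : SimpleGraph V), (T.deleteEdges {s(v, u)}).edgeSet ⊆ G2.edgeSet →
      ∀ (x y : V) (p : (T.deleteEdges {s(v, u)}).Walk x y), G2.dist x y ≤ p.length := by
    intro G2 hs x y p
    have := SimpleGraph.dist_le (p.transfer G2 fun e he => hs (p.edges_subset_edgeSet he))
    rwa [SimpleGraph.Walk.length_transfer] at this
  -- distance comparisons on the v-side
  have dleA : ∀ x y, (T.deleteEdges {s(v, u)}).Reachable v x →
      (T.deleteEdges {s(v, u)}).Reachable v y → T'.dist x y ≤ T.dist x y := by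
    intro x y hx hy
    obtain ⟨p, hp⟩ := geodesic_transfer hc hvu hbr hx hy
    exact hp ▸ distle T' hsubT' x y p
  have dgeA : ∀ x y, (T.deleteEdges {s(v, u)}).Reachable v x →
      (T.deleteEdges {s(v, u)}).Reachable v y → T.dist x y ≤ T'.dist x y := by
    intro x y hx hy
    have hx' : (T'.deleteEdges {s(v, w)}).Reachable v x := by rw [HeqT']; exact hx
    have hy' : (T'.deleteEdges {s(v, w)}).Reachable v y := by rw [HeqT']; exact hy
    have hex := geodesic_transfer hc' hvw' (tree_bridge hT't hvw') hx' hy'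
    rw [HeqT'] at hex
    obtain ⟨p, hp⟩ := hex
    exact hp ▸ distle T hsubT x y p
  -- u-side comparison
  have hbr2 : ¬(T.deleteEdges {s(u, v)}).Reachable u v := by
    rw [deleteEdges_swap]; exact fun h => hbr h.symm
  have dleB : ∀ x y, (T.deleteEdges {s(v, u)}).Reachable u x →
      (T.deleteEdges {s(v, u)}).Reachable u y → T'.dist x y ≤ T.dist x y := by
    intro x y hx hy
    have hx' : (T.deleteEdges {s(u, v)}).Reachable u x := by rw [deleteEdges_swap]; exact hx
    have hy' : (T.deleteEdges {s(u, v)}).Reachable u y := by rw [deleteEdges_swap]; exact hy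
    have hex := geodesic_transfer hc hvu.symm hbr2 hx' hy'
    rw [deleteEdges_swap] at hex
    obtain ⟨p, hp⟩ := hex
    exact hp ▸ distle T' hsubT' x y p
  -- side facts
  have S4B : ∀ x, (T.deleteEdges {s(v, u)}).Reachable u x →
      T.dist v x = T.dist u x + 1 := fun x hx => dist_from_other_side' hc hvu hbr hx
  have haA : (T.deleteEdges {s(v, u)}).Reachable v a := by
    rcases side_total hc v u a with h | h
    · exact h
    · exfalso
      have e1 := S4B a h
      have e2 := S4B b hb
      have tri := hc.dist_triangle (u := a) (v := u) (w := b)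
      have c1 : T.dist a u = T.dist u a := SimpleGraph.dist_comm
      have c2 : T.dist a v = T.dist v a := SimpleGraph.dist_comm
      omega
  have crossA : ∀ z, (T.deleteEdges {s(v, u)}).Reachable v z →
      T.dist v z + T.dist v b ≤ diam T := by
    intro z hz
    have e1 := cross_dist hc hvu hbr hz hb
    have e2 := S4B b hb
    have c1 : T.dist z v = T.dist v z := SimpleGraph.dist_comm
    have hle := dist_le_diam T z b
    omega
  have crossB : ∀ z, (T.deleteEdges {s(v, u)}).Reachable u z →
      T.dist a v + T.dist v z ≤ diam T := by
    intro z hz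
    have e1 := cross_dist hc hvu hbr haA hz
    have e2 := S4B z hz
    have hle := dist_le_diam T a z
    omega
  have Emax : ecc T v ≤ max (T.dist v a) (T.dist v b) := by
    apply Finset.sup_le
    intro z _
    rcases side_total hc v u z with h | h
    · have h1 := crossA z h
      have c2 : T.dist a v = T.dist v a := SimpleGraph.dist_comm
      have : T.dist v z ≤ T.dist v a := by omega
      exact le_trans this (le_max_left _ _)
    · have h1 := crossB z h
      have : T.dist v z ≤ T.dist v b := by omega
      exact le_trans this (le_max_right _ _)
  have hdae' : T.dist v a ≤ ecc T' v :=
    le_trans (dgeA v a (Reachable.refl v) haA) (dist_le_ecc T' v a)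
  have he'db : ecc T' v < T.dist v b := by
    have h1 := lt_of_lt_of_le himp Emax
    rcases lt_max_iff.mp h1 with h | h
    · exact absurd h (not_lt.mpr hdae')
    · exact h
  -- final bound
  have hxy : ∀ x y, T'.dist x y < diam T := by
    intro x y
    rcases side_total hc v u x with hx | hx <;> rcases side_total hc v u y with hy | hy
    · have h1 := dleA x y hx hy
      have h2 := dist_le_diam T x y
      rcases Nat.lt_or_ge (T.dist x y) (diam T) with h | h
      · omega
      · have heq : T.dist x y = diam T := le_antisymm h2 h
        rcases huniq x y heq with ⟨rfl, rfl⟩ | ⟨rfl, rfl⟩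
        · exact absurd hb fun hh => not_both _ hy hh
        · exact absurd hb fun hh => not_both _ hx hh
    · have tri := hc'.dist_triangle (u := x) (v := v) (w := y)
      have h1 : T'.dist x v ≤ T.dist x v := dleA x v hx (Reachable.refl v)
      have h2 := crossA x hx
      have h3 : T'.dist v y ≤ ecc T' v := dist_le_ecc T' v y
      have c1 : T.dist x v = T.dist v x := SimpleGraph.dist_comm
      omega
    · have tri := hc'.dist_triangle (u := y) (v := v) (w := x)
      have h1 : T'.dist y v ≤ T.dist y v := dleA y v hy (Reachable.refl v)
      have h2 := crossA y hy
      have h3 : T'.dist v x ≤ ecc T' v := dist_le_ecc T' v x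
      have c1 : T.dist y v = T.dist v y := SimpleGraph.dist_comm
      have c2 : T'.dist x y = T'.dist y x := SimpleGraph.dist_comm
      omega
    · have h1 := dleB x y hx hy
      have h2 := dist_le_diam T x y
      rcases Nat.lt_or_ge (T.dist x y) (diam T) with h | h
      · omega
      · have heq : T.dist x y = diam T := le_antisymm h2 h
        rcases huniq x y heq with ⟨rfl, rfl⟩ | ⟨rfl, rfl⟩
        · exact absurd haA fun hh => not_both _ hh hx
        · exact absurd haA fun hh => not_both _ hh hy
  have hecc : ∀ x, ecc T' x < diam T := by
    intro x
    exact (Finset.sup_lt_iff hDpos).mpr fun y _ => hxy x y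
  exact (Finset.sup_lt_iff hDpos).mpr fun x _ => hecc x

set_option linter.unusedSectionVars false in
lemma keyZ (T T' : SimpleGraph V) (hT : T.IsTree) (hT't : T'.IsTree)
    (v u w a b : V) (hvu : T.Adj v u)
    (hT'edges : T'.edgeSet = (T.edgeSet \ {s(v, u)}) ∪ {s(v, w)})
    (himp : ecc T' v < ecc T v)
    (hDpos : 0 < diam T)
    (hdab : T.dist a b = diam T)
    (hsplit : T.dist a v + T.dist v b = diam T)
    (huniq : ∀ x y : V, T.dist x y = diam T → (x = a ∧ y = b) ∨ (x = b ∧ y = a))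
    (haA : (T.deleteEdges {s(v, u)}).Reachable v a)
    (hbA : (T.deleteEdges {s(v, u)}).Reachable v b) :
    False := by
  have hc := hT.isConnected
  have hc' := hT't.isConnected
  have hne : T' ≠ T := fun h => absurd himp (by rw [h]; exact lt_irrefl _)
  obtain ⟨hvw', hnotT, HeqT'⟩ := swap_setup hT hT't hvu hT'edges hne
  have hbr : ¬(T.deleteEdges {s(v, u)}).Reachable v u := tree_bridge hT hvu
  have hsubT : (T.deleteEdges {s(v, u)}).edgeSet ⊆ T.edgeSet := by
    rw [SimpleGraph.edgeSet_deleteEdges]; exact Set.diff_subset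
  have distle : ∀ (G2 : SimpleGraph V), (T.deleteEdges {s(v, u)}).edgeSet ⊆ G2.edgeSet →
      ∀ (x y : V) (p : (T.deleteEdges {s(v, u)}).Walk x y), G2.dist x y ≤ p.length := by
    intro G2 hs x y p
    have := SimpleGraph.dist_le (p.transfer G2 fun e he => hs (p.edges_subset_edgeSet he))
    rwa [SimpleGraph.Walk.length_transfer] at this
  have dgeA : ∀ x y, (T.deleteEdges {s(v, u)}).Reachable v x →
      (T.deleteEdges {s(v, u)}).Reachable v y → T.dist x y ≤ T'.dist x y := by
    intro x y hx hy
    have hx' : (T'.deleteEdges {s(v, w)}).Reachable v x := by rw [HeqT']; exact hx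
    have hy' : (T'.deleteEdges {s(v, w)}).Reachable v y := by rw [HeqT']; exact hy
    have hex := geodesic_transfer hc' hvw' (tree_bridge hT't hvw') hx' hy'
    rw [HeqT'] at hex
    obtain ⟨p, hp⟩ := hex
    exact hp ▸ distle T hsubT x y p
  have S4B : ∀ x, (T.deleteEdges {s(v, u)}).Reachable u x →
      T.dist v x = T.dist u x + 1 := fun x hx => dist_from_other_side' hc hvu hbr hx
  have : Nonempty V := ⟨v⟩
  obtain ⟨z, -, hz⟩ :=
    Finset.exists_mem_eq_sup Finset.univ Finset.univ_nonempty (fun y => T.dist v y)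
  have hEz : ecc T v = T.dist v z := hz
  rcases side_total hc v u z with hzA | hzB
  · have hge := dgeA v z (Reachable.refl v) hzA
    have hle := dist_le_ecc T' v z
    omega
  · have e1 := cross_dist hc hvu hbr haA hzB
    have e2 := S4B z hzB
    have e3 : T.dist v b ≤ ecc T v := dist_le_ecc T v b
    have hle := dist_le_diam T a z
    have heq : T.dist a z = diam T := by omega
    rcases huniq a z heq with ⟨-, hzb⟩ | ⟨hab, hza⟩
    · exact hbr (hbA.trans (hzb ▸ hzB).symm)
    · have hself : T.dist a b = 0 := by rw [hab, SimpleGraph.dist_self]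
      omega

end Key

theorem stmt18 [Fintype V] [DecidableEq V] (T : SimpleGraph V) (hT : T.IsTree)
    (hdiam : 4 ≤ diam T)
    (a b : V) (p : T.Path a b) (hlen : p.1.length = diam T)
    (huniq : ∀ x y : V, T.dist x y = diam T → (x = a ∧ y = b) ∨ (x = b ∧ y = a))
    (v : V) (hv : v ∈ p.1.support)
    (T' : SimpleGraph V) (hT't : T'.IsTree)
    (u w : V) (hvu : T.Adj v u)
    (hT'edges : T'.edgeSet = (T.edgeSet \ {s(v, u)}) ∪ {s(v, w)})
    (himp : ecc T' v < ecc T v) :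
    diam T' < diam T := by
  have hc := hT.isConnected
  have hDpos : 0 < diam T := by omega
  have hplen : p.1.length = T.dist a b := tree_path_length hT p.1 p.2
  have hdab : T.dist a b = diam T := hplen ▸ hlen
  have hsplit : T.dist a v + T.dist v b = diam T := by
    have := dist_split hc p.1 (by rw [hplen]) hv
    omega
  rcases side_total hc v u b with hbA | hbB
  · rcases side_total hc v u a with haA | haB
    · exact (keyZ T T' hT hT't v u w a b hvu hT'edges himp hDpos hdab hsplit huniq
        haA hbA).elim
    · refine key T T' hT hT't v u w b a hvu hT'edges himp hDpos ?_ ?_ ?_ haB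
      · rw [SimpleGraph.dist_comm]; exact hdab
      · have c1 : T.dist b v = T.dist v b := SimpleGraph.dist_comm
        have c2 : T.dist v a = T.dist a v := SimpleGraph.dist_comm
        omega
      · intro x y h
        exact (huniq x y h).symm
  · exact key T T' hT hT't v u w a b hvu hT'edges himp hDpos hdab hsplit huniq hbB

end NCG
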